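/- Suppose char F is odd. Let C be a 2-quasi-cyclic code with Goursat data (C1, C2, C12, g). Then C is a consta-dihedral code (i.e., C is invariant under the map (a, a') ↦ (−ā', ā)) if and only if C̄1 = C2, C̄12 = C12, and ḡ·g = −e_{C12}. -/

import Mathlib

noncomputable section

/-- The cyclic group of order `n`, written multiplicatively. -/
abbrev Zn (n : ℕ) := Multiplicative (ZMod n)

/-- The group algebra `FH` of the cyclic group of order `n` over `F`. -/
abbrev FH (F : Type*) [Field F] (n : ℕ) := MonoidAlgebra F (Zn n)

variable {F : Type*} [Field F] [Fintype F] {n : ℕ} [NeZero n]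

/-- The "bar" map of the group algebra, induced by `x ↦ x⁻¹`. -/
def bar (a : FH F n) : FH F n :=
  MonoidAlgebra.ofCoeff (Finsupp.equivMapDomain (Equiv.inv (Zn n)) a.coeff)

/-- The inner product on `FH`: `⟨a, b⟩ = ∑ a_g * b_g`. -/
def innerFH (a b : FH F n) : F := ∑ g : Zn n, a.coeff g * b.coeff g

/-- The inner product on `FH × FH`. -/
def innerFH2 (a b : FH F n × FH F n) : F := innerFH a.1 b.1 + innerFH a.2 b.2

/-- `Ĉ₁₂ = {(c, c·g) : c ∈ C12}` as an `FH`-submodule of `FH × FH`. -/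
def hatSub (C12 : Ideal (FH F n)) (g : FH F n) : Submodule (FH F n) (FH F n × FH F n) :=
  Submodule.map (LinearMap.prod LinearMap.id (LinearMap.mulRight (FH F n) g)) C12

/-- A 2-quasi-cyclic code (an `FH`-submodule of `FH × FH`) is self-dual if it
equals its orthogonal complement. -/
def IsSelfDual (C : Submodule (FH F n) (FH F n × FH F n)) : Prop :=
  (C : Set (FH F n × FH F n)) = {v | ∀ c ∈ C, innerFH2 v c = 0}

/-- A 2-quasi-cyclic code is a dihedral code iff it is invariant under
`(a, a') ↦ (ā', ā)` (left multiplication by `y` in the dihedral group algebra). -/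
def IsDihedral (C : Submodule (FH F n) (FH F n × FH F n)) : Prop :=
  ∀ p ∈ C, (bar p.2, bar p.1) ∈ C

/-- A 2-quasi-cyclic code is a consta-dihedral code iff it is invariant under
`(a, a') ↦ (−ā', ā)` (left multiplication by `ỹ` in the consta-dihedral algebra). -/
def IsConstaDihedral (C : Submodule (FH F n) (FH F n × FH F n)) : Prop :=
  ∀ p ∈ C, (-(bar p.2), bar p.1) ∈ C

section BarLemmas
set_option linter.unusedSectionVars false

lemma bar_apply' (a : FH F n) (x : Zn n) : (bar a).coeff x = a.coeff x⁻¹ := rfl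

lemma bar_bar' (a : FH F n) : bar (bar a) = a := by
  ext x; simp [bar_apply']

lemma bar_eq_mapDomain (c : FH F n) :
    bar c = MonoidAlgebra.mapDomain (fun x : Zn n => x⁻¹) c := by
  rw [bar, Finsupp.equivMapDomain_eq_mapDomain]; rfl

lemma bar_add' (a b : FH F n) : bar (a + b) = bar a + bar b := by
  simp only [bar_eq_mapDomain]; exact MonoidAlgebra.mapDomain_add _ _ _

lemma bar_zero' : bar (0 : FH F n) = 0 := by
  simp only [bar_eq_mapDomain]; exact MonoidAlgebra.mapDomain_zero _

lemma bar_mul' (a b : FH F n) : bar (a * b) = bar a * bar b := by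
  simp only [bar_eq_mapDomain]
  exact MonoidAlgebra.mapDomain_mul
    (⟨fun x : Zn n => x⁻¹, fun x y => mul_inv x y⟩ : Zn n →ₙ* Zn n) a b

lemma mem_sup_iff' (C1 C2 C12 : Ideal (FH F n)) (g : FH F n)
    (p : FH F n × FH F n) :
    p ∈ Submodule.prod C1 C2 ⊔ hatSub C12 g ↔
      ∃ c1 ∈ C1, ∃ c2 ∈ C2, ∃ c ∈ C12, p = (c1 + c, c2 + c * g) := by
  rw [Submodule.mem_sup]
  constructor
  · rintro ⟨y, hy, z, hz, rfl⟩
    obtain ⟨c, hc, rfl⟩ := hz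
    exact ⟨y.1, hy.1, y.2, hy.2, c, hc, rfl⟩
  · rintro ⟨c1, h1, c2, h2, c, hc, rfl⟩
    exact ⟨(c1, c2), ⟨h1, h2⟩, (c, c * g), ⟨c, hc, rfl⟩, rfl⟩

end BarLemmas

/-- (char F odd.) A 2-quasi-cyclic code `C` with Goursat data `(C1, C2, C12, g)` is
a consta-dihedral code iff `C̄1 = C2`, `C̄12 = C12`, and `ḡ·g = −e_{C12}`. -/
theorem consta_dihedral_iff (F : Type*) [Field F] [Fintype F] (n : ℕ) [NeZero n]
    (hn : 1 < n) (hcop : Nat.Coprime n (Fintype.card F))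
    (hchar : ringChar F ≠ 2)
    (C : Submodule (FH F n) (FH F n × FH F n))
    (C1 C2 C12 : Ideal (FH F n)) (e g h : FH F n)
    (h112 : C1 ⊓ C12 = ⊥) (h212 : C2 ⊓ C12 = ⊥)
    (heC : e ∈ C12) (hspan : C12 = Ideal.span {e}) (hid : ∀ c ∈ C12, e * c = c)
    (hg : g ∈ C12) (hh : h ∈ C12) (hgh : g * h = e)
    (hC : C = Submodule.prod C1 C2 ⊔ hatSub C12 g) :
    IsConstaDihedral C ↔
      (bar '' (C1 : Set (FH F n)) = (C2 : Set (FH F n)) ∧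
       bar '' (C12 : Set (FH F n)) = (C12 : Set (FH F n)) ∧
       bar g * g = -e) := by
  have memC : ∀ p : FH F n × FH F n, p ∈ C ↔
      ∃ c1 ∈ C1, ∃ c2 ∈ C2, ∃ c ∈ C12, p = (c1 + c, c2 + c * g) := by
    intro p; rw [hC]; exact mem_sup_iff' C1 C2 C12 g p
  have hz1 : ∀ a : FH F n, a ∈ C1 → a ∈ C12 → a = 0 := by
    intro a ha ha'
    have : a ∈ C1 ⊓ C12 := ⟨ha, ha'⟩
    rw [h112] at this
    simpa using this
  have hz2 : ∀ a : FH F n, a ∈ C2 → a ∈ C12 → a = 0 := by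
    intro a ha ha'
    have : a ∈ C2 ⊓ C12 := ⟨ha, ha'⟩
    rw [h212] at this
    simpa using this
  -- If the second component is 0, the first lies in C1.
  have D1 : ∀ a : FH F n, (a, (0 : FH F n)) ∈ C → a ∈ C1 := by
    intro a hmem
    obtain ⟨c1, m1, c2, m2, c, mc, heq⟩ := (memC _).1 hmem
    rw [Prod.mk.injEq] at heq
    obtain ⟨ha, hb⟩ := heq
    have hcg : c * g = -c2 := by linear_combination -hb
    have hcg0 : c * g = 0 :=
      hz2 _ (by rw [hcg]; exact neg_mem m2) (Ideal.mul_mem_right g _ mc)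
    have hc0 : c = 0 := by
      have h1 : e * c = c := hid c mc
      calc c = e * c := h1.symm
        _ = (c * g) * h := by rw [← hgh]; ring
        _ = 0 := by rw [hcg0]; ring
    rw [ha, hc0, add_zero]; exact m1
  -- If the first component is 0, the second lies in C2.
  have D2 : ∀ b : FH F n, ((0 : FH F n), b) ∈ C → b ∈ C2 := by
    intro b hmem
    obtain ⟨c1, m1, c2, m2, c, mc, heq⟩ := (memC _).1 hmem
    rw [Prod.mk.injEq] at heq
    obtain ⟨ha, hb⟩ := heq
    have hc : c = -c1 := by linear_combination -ha
    have hc0 : c = 0 := hz1 _ (by rw [hc]; exact neg_mem m1) mc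
    rw [hb, hc0, zero_mul, add_zero]; exact m2
  constructor
  · intro hCD
    -- bar C1 ⊆ C2
    have F1 : ∀ a ∈ C1, bar a ∈ C2 := by
      intro a ha
      have hmem : ((a, (0 : FH F n)) : FH F n × FH F n) ∈ C :=
        (memC _).2 ⟨a, ha, 0, zero_mem _, 0, zero_mem _, by simp⟩
      have h' := hCD _ hmem
      simp only [bar_zero', neg_zero] at h'
      exact D2 _ h'
    -- bar C2 ⊆ C1
    have F2 : ∀ b ∈ C2, bar b ∈ C1 := by
      intro b hb
      have hmem : (((0 : FH F n), b) : FH F n × FH F n) ∈ C :=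
        (memC _).2 ⟨0, zero_mem _, b, hb, 0, zero_mem _, by simp⟩
      have h' := hCD _ hmem
      simp only [bar_zero'] at h'
      exact neg_mem_iff.mp (D1 _ h')
    have himg1 : bar '' (C1 : Set (FH F n)) = (C2 : Set (FH F n)) := by
      apply Set.eq_of_subset_of_subset
      · rintro _ ⟨a, ha, rfl⟩; exact F1 a ha
      · intro b hb
        exact ⟨bar b, F2 b hb, bar_bar' b⟩
    -- the key decomposition coming from (e, g) ∈ C
    have hmem_eg : ((e, g) : FH F n × FH F n) ∈ C :=
      (memC _).2 ⟨0, zero_mem _, 0, zero_mem _, e, heC, by simp [hid g hg]⟩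
    have h' := hCD _ hmem_eg
    obtain ⟨c1, m1, c2, m2, d, md, heq⟩ := (memC _).1 h'
    rw [Prod.mk.injEq] at heq
    obtain ⟨heq1', heq2'0⟩ := heq
    have heq1 : -(bar g) = c1 + d := heq1'
    have heq2 : bar e = c2 + d * g := heq2'0
    have hee : e * e = e := hid e heC
    have hdg12 : d * g ∈ C12 := Ideal.mul_mem_right g _ md
    have hbc2C1 : bar c2 ∈ C1 := F2 c2 m2
    have h_ec2 : e * c2 = 0 :=
      hz2 _ (Ideal.mul_mem_left _ e m2) (Ideal.mul_mem_right c2 _ heC)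
    have h_ebc2 : e * bar c2 = 0 :=
      hz1 _ (Ideal.mul_mem_left _ e hbc2C1) (Ideal.mul_mem_right _ _ heC)
    have h_bebc2 : bar e * bar c2 = 0 := by
      rw [← bar_mul', h_ec2, bar_zero']
    have h_bec2 : bar e * c2 = 0 := by
      have : bar e * c2 = bar (e * bar c2) := by
        rw [bar_mul', bar_bar']
      rw [this, h_ebc2, bar_zero']
    have heq2' : e = bar c2 + bar (d * g) := by
      have := congrArg bar heq2
      rwa [bar_bar', bar_add'] at this
    have hEbe : e * bar e = d * g := by
      rw [heq2, mul_add, h_ec2, hid _ hdg12, zero_add]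
    have hbEe : bar e * e = bar (d * g) := by
      have h' := congrArg (fun t => bar e * t) heq2'
      simp only [mul_add] at h'
      rw [h_bebc2, zero_add, ← bar_mul', hid _ hdg12] at h'
      exact h'
    have hbar_dg : bar (d * g) = d * g := by
      rw [← hbEe, ← hEbe]; ring
    have key : bar e - e = c2 - bar c2 := by
      rw [heq2, heq2', hbar_dg]; ring
    have h5 : e * bar e = e := by
      have h' : e * (bar e - e) = e * (c2 - bar c2) := congrArg (e * ·) key
      rw [mul_sub, mul_sub, h_ec2, h_ebc2, hee, sub_zero] at h'
      linear_combination h'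
    have h6 : bar e = e := by
      have h' : bar e * (bar e - e) = bar e * (c2 - bar c2) := congrArg (bar e * ·) key
      rw [mul_sub, mul_sub, h_bec2, h_bebc2, sub_zero] at h'
      have hbb : bar e * bar e = bar e := by rw [← bar_mul', hee]
      have : bar e = bar e * e := by linear_combination h' - hbb
      rw [this, mul_comm, h5]
    have hbar12 : ∀ a ∈ C12, bar a ∈ C12 := by
      intro a ha
      have : bar a = e * bar a := by
        conv_lhs => rw [← hid a ha]
        rw [bar_mul', h6]
      rw [this]
      exact Ideal.mul_mem_right _ _ heC
    have himg12 : bar '' (C12 : Set (FH F n)) = (C12 : Set (FH F n)) := by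
      apply Set.eq_of_subset_of_subset
      · rintro _ ⟨a, ha, rfl⟩; exact hbar12 a ha
      · intro a ha
        exact ⟨bar a, hbar12 a ha, bar_bar' a⟩
    refine ⟨himg1, himg12, ?_⟩
    -- now extract bar g * g = -e
    rw [h6] at heq2
    have hc2 : c2 = 0 := hz2 _ m2 (by
      have : c2 = e - d * g := by linear_combination -heq2
      rw [this]; exact sub_mem heC hdg12)
    have hdg_e : d * g = e := by
      rw [hc2, zero_add] at heq2; exact heq2.symm
    have h_ec1 : e * c1 = 0 :=
      hz1 _ (Ideal.mul_mem_left _ e m1) (Ideal.mul_mem_right c1 _ heC)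
    have hbgC12 : bar g ∈ C12 := hbar12 g hg
    have hd : d = -(bar g) := by
      have h' := congrArg (e * ·) heq1
      simp only [mul_add, mul_neg] at h'
      rw [h_ec1, hid _ md, hid _ hbgC12, zero_add] at h'
      linear_combination -h'
    rw [hd] at hdg_e
    linear_combination -hdg_e
  · rintro ⟨himg1, himg12, hgg⟩
    intro p hp
    obtain ⟨c1, m1, c2, m2, c, mc, rfl⟩ := (memC _).1 hp
    have hbc1 : bar c1 ∈ C2 := by
      have : bar c1 ∈ bar '' (C1 : Set (FH F n)) := ⟨c1, m1, rfl⟩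
      rw [himg1] at this; exact this
    have hbc2 : bar c2 ∈ C1 := by
      have : c2 ∈ bar '' (C1 : Set (FH F n)) := himg1.symm ▸ m2
      obtain ⟨a, ha, rfl⟩ := this
      rwa [bar_bar']
    have hbc : bar c ∈ C12 := by
      have : bar c ∈ bar '' (C12 : Set (FH F n)) := ⟨c, mc, rfl⟩
      rw [himg12] at this; exact this
    have hbg : bar g ∈ C12 := by
      have : bar g ∈ bar '' (C12 : Set (FH F n)) := ⟨g, hg, rfl⟩
      rw [himg12] at this; exact this
    refine (memC _).2 ⟨-(bar c2), neg_mem hbc2, bar c1, hbc1,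
      -(bar c * bar g), neg_mem (Ideal.mul_mem_right _ _ hbc), ?_⟩
    rw [Prod.mk.injEq]
    constructor
    · show -(bar ((c1 + c, c2 + c * g) : FH F n × FH F n).2) = _
      simp only
      rw [bar_add', bar_mul']
      ring
    · show bar ((c1 + c, c2 + c * g) : FH F n × FH F n).1 = _
      simp only
      rw [bar_add']
      have : -(bar c * bar g) * g = bar c := by
        have h1 : -(bar c * bar g) * g = bar c * (-(bar g * g)) := by ring
        rw [h1, hgg, neg_neg, mul_comm]
        exact hid _ hbc
      rw [this]
end
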